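/- Let $\Lambda$ be an $r$-dimensional $\mathbb{F}_{q^n}$-vector space with a non-degenerate reflexive sesquilinear form $\sigma$, and let $\sigma'(u,v) = \mathrm{Tr}_{q^n/q}(\sigma(u,v))$ be the induced $\mathbb{F}_q$-bilinear form on $\Lambda$ viewed as an $rn$-dimensional $\mathbb{F}_q$-space. If $R$ is an $s$-dimensional $\mathbb{F}_{q^n}$-subspace and $U$ is a $t$-dimensional $\mathbb{F}_q$-subspace of $\Lambda$, then $\dim_{\mathbb{F}_q}(U^{\tau'} \cap R^{\tau}) - \dim_{\mathbb{F}_q}(U \cap R) = rn - t - sn$, where $\tau$ and $\tau'$ denote the orthogonal complement maps with respect to $\sigma$ and $\sigma'$ respectively. -/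

import Mathlib

private lemma aux_card_pow (K : Type*) [Field K] [Fintype K]
    (M : Type*) [AddCommGroup M] [Module K M] [Finite M] :
    Nat.card M = Fintype.card K ^ Module.finrank K M := by
  have : Fintype M := Fintype.ofFinite M
  rw [Nat.card_eq_fintype_card]
  exact Module.card_eq_pow_finrank

/-- Duality formula: for a non-degenerate reflexive sesquilinear form `σ` on an
`r`-dimensional `F_{q^n}`-space `Λ` and the induced trace form `σ'`, for an
`s`-dimensional `F_{q^n}`-subspace `R` and a `t`-dimensional `F_q`-subspace `U`,
`dim_q(U^{τ'} ∩ R^τ) - dim_q(U ∩ R) = rn - t - sn`. -/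
theorem stmt_4 (q n r s t : ℕ) (K L : Type*) [Field K] [Field L] [Algebra K L]
    [Fintype K] [Fintype L] (hK : Fintype.card K = q) (hL : Fintype.card L = q ^ n)
    (Λ : Type*) [AddCommGroup Λ] [Module L Λ] [Module K Λ] [IsScalarTower K L Λ]
    [Module.Finite L Λ] (hΛ : Module.finrank L Λ = r)
    (σ : Λ → Λ → L) (ι : L ≃+* L)
    (hadd₁ : ∀ u v w : Λ, σ (u + v) w = σ u w + σ v w)
    (hadd₂ : ∀ u v w : Λ, σ u (v + w) = σ u v + σ u w)
    (hsmul₁ : ∀ (a : L) (u v : Λ), σ (a • u) v = a * σ u v)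
    (hsmul₂ : ∀ (a : L) (u v : Λ), σ u (a • v) = ι a * σ u v)
    (hrefl : ∀ u v : Λ, σ u v = 0 ↔ σ v u = 0)
    (hnd : ∀ u : Λ, u ≠ 0 → ∃ v : Λ, σ u v ≠ 0)
    (R : Submodule L Λ) (hR : Module.finrank L R = s)
    (U : Submodule K Λ) (hU : Module.finrank K U = t)
    (Rτ : Submodule L Λ) (hRτ : ∀ u : Λ, u ∈ Rτ ↔ ∀ x ∈ R, σ u x = 0)
    (Uτ : Submodule K Λ)
    (hUτ : ∀ u : Λ, u ∈ Uτ ↔ ∀ x ∈ U, Algebra.trace K L (σ u x) = 0) :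
    (Module.finrank K ↥(Uτ ⊓ Rτ.restrictScalars K) : ℤ) -
        Module.finrank K ↥(U ⊓ R.restrictScalars K) =
      (r : ℤ) * n - t - s * n := by
  classical
  have hq1 : 1 < q := hK ▸ Fintype.one_lt_card
  haveI : Module.Finite K L := Module.Finite.of_finite
  haveI : Module.Finite K Λ := Module.Finite.trans L Λ
  haveI : Finite Λ := Module.finite_of_finite K
  haveI : Algebra.IsSeparable K L := inferInstance
  -- finrank K L = n
  have hn : Module.finrank K L = n := by
    have h := Module.card_eq_pow_finrank (K := K) (V := L)
    rw [hK, hL] at h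
    exact (Nat.pow_right_injective hq1 h.symm)
  -- trace form nondegeneracy
  have htr : ∀ c : L, (∀ b : L, Algebra.trace K L (b * c) = 0) → c = 0 := by
    intro c hc
    refine (traceForm_nondegenerate K L).1 c (fun b => ?_)
    rw [Algebra.traceForm_apply, mul_comm]
    exact hc b
  -- basic facts about σ
  have hσ0r : ∀ u : Λ, σ u 0 = 0 := by
    intro u
    have h := hsmul₂ 0 u u
    rwa [zero_smul, map_zero, zero_mul] at h
  have hneg₂ : ∀ (u y : Λ), σ u (-y) = - σ u y := by
    intro u y
    have h := hsmul₂ (-1) u y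
    rw [neg_smul, one_smul] at h
    rw [h, map_neg, map_one, neg_mul, one_mul]
  have hsub₂ : ∀ (u x y : Λ), σ u (x - y) = σ u x - σ u y := by
    intro u x y
    rw [sub_eq_add_neg, hadd₂, hneg₂, sub_eq_add_neg]
  -- the image of K in L is closed under ι⁻¹
  have hfix : ∀ c : L, c ^ q = c → ∃ b : K, algebraMap K L b = c := by
    intro c hc
    set P : Polynomial L := Polynomial.X ^ q - Polynomial.X with hP
    have hPne : P ≠ 0 := by
      intro h
      have hq1' : q ≠ 1 := by omega
      have h1 : P.coeff q = 1 := by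
        rw [hP]
        simp [Polynomial.coeff_sub, Polynomial.coeff_X_pow, Polynomial.coeff_X,
          hq1', Ne.symm hq1']
      rw [h] at h1
      simp at h1
    have hdeg : P.natDegree ≤ q := by
      refine le_trans (Polynomial.natDegree_sub_le _ _) ?_
      simp [Polynomial.natDegree_X_pow, Polynomial.natDegree_X]
      omega
    have hrootsle : P.roots.toFinset.card ≤ q :=
      le_trans (Multiset.toFinset_card_le _) (le_trans (Polynomial.card_roots' P) hdeg)
    set F : Finset L := Finset.univ.image (algebraMap K L) with hF
    have hFcard : F.card = q := by
      rw [hF, Finset.card_image_of_injective _ (algebraMap K L).injective,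
        Finset.card_univ, hK]
    have hFsub : F ⊆ P.roots.toFinset := by
      intro x hx
      rw [hF, Finset.mem_image] at hx
      obtain ⟨b, -, rfl⟩ := hx
      rw [Multiset.mem_toFinset, Polynomial.mem_roots hPne]
      show P.eval _ = 0
      rw [hP]
      simp only [Polynomial.eval_sub, Polynomial.eval_pow, Polynomial.eval_X]
      rw [← map_pow, ← hK, FiniteField.pow_card, sub_self]
    have hFeq : F = P.roots.toFinset :=
      Finset.eq_of_subset_of_card_le hFsub (by rw [hFcard]; exact hrootsle)
    have hcmem : c ∈ P.roots.toFinset := by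
      rw [Multiset.mem_toFinset, Polynomial.mem_roots hPne]
      show P.eval c = 0
      rw [hP]
      simp only [Polynomial.eval_sub, Polynomial.eval_pow, Polynomial.eval_X]
      rw [hc, sub_self]
    rw [← hFeq, hF, Finset.mem_image] at hcmem
    obtain ⟨b, -, hb⟩ := hcmem
    exact ⟨b, hb⟩
  have hiota : ∀ a : K, ∃ b : K, ι (algebraMap K L b) = algebraMap K L a := by
    intro a
    have hca : (algebraMap K L a) ^ q = algebraMap K L a := by
      rw [← map_pow, ← hK, FiniteField.pow_card]
    have hcq : (ι.symm (algebraMap K L a)) ^ q = ι.symm (algebraMap K L a) := by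
      rw [← map_pow, hca]
    obtain ⟨b, hb⟩ := hfix _ hcq
    exact ⟨b, by rw [hb, RingEquiv.apply_symm_apply]⟩
  -- the semi-dual map
  set ell : Λ → Module.Dual K Λ := fun x =>
    { toFun := fun u => Algebra.trace K L (σ u x)
      map_add' := fun u v => by
        show Algebra.trace K L (σ (u + v) x)
          = Algebra.trace K L (σ u x) + Algebra.trace K L (σ v x)
        rw [hadd₁, map_add]
      map_smul' := fun a u => by
        show Algebra.trace K L (σ (a • u) x) = a • Algebra.trace K L (σ u x)
        rw [← algebraMap_smul L a u, hsmul₁, ← Algebra.smul_def, map_smul] } with hell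
  have ell_apply : ∀ (x u : Λ), ell x u = Algebra.trace K L (σ u x) := fun _ _ => rfl
  have ell_add : ∀ x y : Λ, ell (x + y) = ell x + ell y := by
    intro x y
    ext u
    simp only [ell_apply, hadd₂, map_add, LinearMap.add_apply]
  have ell_zero : ell 0 = 0 := by
    ext u
    simp only [ell_apply, hσ0r, map_zero, LinearMap.zero_apply]
  have hzero : ∀ x : Λ, (∀ u : Λ, Algebra.trace K L (σ u x) = 0) → x = 0 := by
    intro x hx
    by_contra hx0
    have h1 : ∀ u : Λ, σ u x = 0 := by
      intro u
      refine htr _ (fun b => ?_)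
      have h := hx (b • u)
      rwa [hsmul₁] at h
    have h2 : ∀ u : Λ, σ x u = 0 := fun u => (hrefl u x).mp (h1 u)
    obtain ⟨v, hv⟩ := hnd x hx0
    exact hv (h2 v)
  have ell_inj : Function.Injective ell := by
    intro x y hxy
    have h : x - y = 0 := by
      refine hzero _ (fun u => ?_)
      rw [hsub₂]
      rw [map_sub]
      have := congrFun (congrArg (fun f : Module.Dual K Λ => (f : Λ → K)) hxy) u
      simp only [ell_apply] at this
      rw [show Algebra.trace K L (σ u x) = ell x u from rfl,
        show Algebra.trace K L (σ u y) = ell y u from rfl, hxy, sub_self]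
    exact sub_eq_zero.mp h
  set W : Submodule K Λ := U ⊔ R.restrictScalars K with hW
  -- the image submodule
  set S : Submodule K (Module.Dual K Λ) :=
    { carrier := ell '' (W : Set Λ)
      add_mem' := by
        rintro _ _ ⟨x, hx, rfl⟩ ⟨y, hy, rfl⟩
        exact ⟨x + y, W.add_mem hx hy, ell_add x y⟩
      zero_mem' := ⟨0, W.zero_mem, ell_zero⟩
      smul_mem' := by
        rintro a _ ⟨x, hx, rfl⟩
        obtain ⟨b, hb⟩ := hiota a
        refine ⟨b • x, W.smul_mem b hx, ?_⟩
        ext u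
        show Algebra.trace K L (σ u (b • x)) = a • (ell x u)
        rw [← algebraMap_smul L b x, hsmul₂, hb, ← Algebra.smul_def, map_smul]
        rfl } with hS
  have hSmem : ∀ f, f ∈ S ↔ f ∈ ell '' (W : Set Λ) := fun f => Iff.rfl
  -- identification of the intersection with the coannihilator
  have hmem : ∀ u : Λ, u ∈ S.dualCoannihilator ↔ (u ∈ Uτ ∧ u ∈ Rτ) := by
    intro u
    rw [Submodule.mem_dualCoannihilator]
    constructor
    · intro h
      constructor
      · rw [hUτ]
        intro x hx
        have hxS : ell x ∈ S := ⟨x, Submodule.mem_sup_left hx, rfl⟩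
        exact h _ hxS
      · rw [hRτ]
        intro x hx
        refine htr _ (fun b => ?_)
        have hx' : (ι.symm b) • x ∈ R := R.smul_mem _ hx
        have hxS : ell ((ι.symm b) • x) ∈ S :=
          ⟨_, Submodule.mem_sup_right (by simpa using hx'), rfl⟩
        have h0 := h _ hxS
        rw [ell_apply, hsmul₂, RingEquiv.apply_symm_apply] at h0
        exact h0
    · rintro ⟨hu1, hu2⟩ f ⟨x, hx, rfl⟩
      rw [hUτ] at hu1
      rw [hRτ] at hu2
      obtain ⟨y, hy, z, hz, rfl⟩ := Submodule.mem_sup.mp hx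
      rw [ell_apply, hadd₂, map_add, hu1 y hy, hu2 z (by simpa using hz), map_zero,
        add_zero]
  have hEq : Uτ ⊓ Rτ.restrictScalars K = S.dualCoannihilator := by
    ext u
    rw [Submodule.mem_inf, Submodule.restrictScalars_mem, hmem]
  -- finrank of S equals finrank of W
  haveI : Module.Finite K (Module.Dual K Λ) := inferInstance
  haveI : Finite (Module.Dual K Λ) := Module.finite_of_finite K
  have hcardSW : Nat.card ↥S = Nat.card ↥W := by
    have h1 : Nat.card ↥(ell '' (W : Set Λ)) = Nat.card ↥(W : Set Λ) :=
      Nat.card_image_of_injective ell_inj _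
    exact h1
  have hfr : ∀ (M : Submodule K Λ), Nat.card ↥M = q ^ Module.finrank K ↥M := by
    intro M
    rw [aux_card_pow K ↥M, hK]
  have hfrS : Nat.card ↥S = q ^ Module.finrank K ↥S := by
    rw [aux_card_pow K ↥S, hK]
  have hSW : Module.finrank K ↥S = Module.finrank K ↥W := by
    refine Nat.pow_right_injective hq1 ?_
    show q ^ Module.finrank K ↥S = q ^ Module.finrank K ↥W
    rw [← hfrS, ← hfr W, hcardSW]
  -- dimension counts
  have hΛK : Module.finrank K Λ = n * r := by
    rw [← Module.finrank_mul_finrank K L Λ, hn, hΛ]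
  have hRK : Module.finrank K ↥(R.restrictScalars K) = n * s := by
    have e : (R.restrictScalars K) ≃ₗ[K] ↥R :=
      (Submodule.restrictScalarsEquiv K L Λ R).restrictScalars K
    rw [e.finrank_eq, ← Module.finrank_mul_finrank K L ↥R, hn, hR]
  have h1 : Module.finrank K ↥S + Module.finrank K ↥S.dualCoannihilator
      = Module.finrank K Λ := Subspace.finrank_add_finrank_dualCoannihilator_eq S
  have h3 : Module.finrank K ↥W + Module.finrank K ↥(U ⊓ R.restrictScalars K)
      = Module.finrank K ↥U + Module.finrank K ↥(R.restrictScalars K) :=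
    Submodule.finrank_sup_add_finrank_inf_eq U (R.restrictScalars K)
  rw [hEq]
  rw [hU, hRK] at h3
  rw [hΛK, hSW] at h1
  rw [Nat.mul_comm n r] at h1
  rw [Nat.mul_comm n s] at h3
  omega
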